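/- Let κ_1 < ⋯ < κ_N be positive reals, let P_1,...,P_N ∈ (0,1) with Σ_n P_n < 1, and define θ(α) = Σ_{n=1}^N (κ_n/(α + κ_n)) P_n for α ∉ {-κ_1,...,-κ_N}. Then the equation θ(α) = 1 has exactly N real solutions: exactly one in each interval (-κ_{n+1}, -κ_n) for n = 1,...,N-1, one in (-κ_1, 0), and no solutions with α ≥ 0 or α < -κ_N. In particular all solutions are negative, so the corresponding eigenvalues μ = 1/(1-α) are all positive. -/

import Mathlib

open Filter Set

private lemma div_lt_div_aux {c x y : ℝ} (hc : 0 < c) (hxy : x < y) (hsgn : 0 < x * y) :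
    c / y < c / x := by
  have hx : x ≠ 0 := by rintro rfl; simp at hsgn
  have hy : y ≠ 0 := by rintro rfl; simp at hsgn
  have h1 : c / y - c / x = c * (x - y) / (x * y) := by field_simp
  have h2 : c * (x - y) / (x * y) < 0 :=
    div_neg_of_neg_of_pos (by nlinarith) hsgn
  linarith

section helpers

variable {N : ℕ} (κ P : Fin N → ℝ)

private lemma theta_anti (hN : 0 < N) (hκpos : ∀ n, 0 < κ n) (hP : ∀ n, 0 < P n)
    {l r : ℝ} (hpole : ∀ m, -κ m ∉ Set.Ioo l r) :
    StrictAntiOn (fun α => ∑ n, (κ n / (α + κ n)) * P n) (Set.Ioo l r) := by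
  intro a ha b hb hab
  haveI : Nonempty (Fin N) := ⟨⟨0, hN⟩⟩
  apply Finset.sum_lt_sum_of_nonempty Finset.univ_nonempty
  intro m _
  have hsgn : 0 < (a + κ m) * (b + κ m) := by
    by_contra h
    push_neg at h
    have h1 : a + κ m ≤ 0 := by nlinarith
    have h2 : 0 ≤ b + κ m := by nlinarith
    exact hpole m ⟨lt_of_lt_of_le ha.1 (by linarith), lt_of_le_of_lt (by linarith) hb.2⟩
  exact mul_lt_mul_of_pos_right
    (div_lt_div_aux (hκpos m) (by linarith : a + κ m < b + κ m) hsgn) (hP m)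

private lemma theta_contAt {x : ℝ} (hx : ∀ m, x + κ m ≠ 0) :
    ContinuousAt (fun α => ∑ n, (κ n / (α + κ n)) * P n) x := by
  apply tendsto_finset_sum
  intro m _
  exact (((continuousAt_const.div (continuousAt_id.add continuousAt_const)
    (hx m)).mul continuousAt_const) : ContinuousAt _ x)

private lemma theta_tendsto_atTop (hκpos : ∀ n, 0 < κ n) (hP : ∀ n, 0 < P n)
    (hκinj : Function.Injective κ) (j : Fin N) :
    Tendsto (fun α => ∑ n, (κ n / (α + κ n)) * P n) (nhdsWithin (-κ j) (Set.Ioi (-κ j)))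
      atTop := by
  have hrw : (fun α => ∑ n, (κ n / (α + κ n)) * P n)
      = fun α => (κ j * P j) * (α + κ j)⁻¹ +
        ∑ n ∈ Finset.univ.erase j, (κ n / (α + κ n)) * P n := by
    funext α
    rw [← Finset.add_sum_erase Finset.univ _ (Finset.mem_univ j)]
    congr 1
    rw [div_eq_mul_inv]; ring
  rw [hrw]
  apply Tendsto.atTop_add (C := ∑ n ∈ Finset.univ.erase j, (κ n / (-κ j + κ n)) * P n)
  · apply Tendsto.const_mul_atTop (mul_pos (hκpos j) (hP j))
    apply Tendsto.inv_tendsto_nhdsGT_zero (f := fun α => α + κ j)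
    apply tendsto_nhdsWithin_of_tendsto_nhds_of_eventually_within
    · have : Tendsto (fun α : ℝ => α + κ j) (nhds (-κ j)) (nhds (-κ j + κ j)) :=
        (continuous_id.add continuous_const).tendsto _
      simpa using this.mono_left nhdsWithin_le_nhds
    · filter_upwards [self_mem_nhdsWithin] with α (hα : -κ j < α)
      simpa [Set.mem_Ioi] using by linarith
  · apply tendsto_finset_sum
    intro m hm
    have hne : -κ j + κ m ≠ 0 := by
      have : κ m ≠ κ j := fun h => (Finset.mem_erase.1 hm).1 (hκinj h)
      intro h; exact this (by linarith)
    exact (((continuousAt_const.div (continuousAt_id.add continuousAt_const)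
      hne).mul continuousAt_const).continuousWithinAt : ContinuousWithinAt _ _ _)

private lemma theta_tendsto_atBot (hκpos : ∀ n, 0 < κ n) (hP : ∀ n, 0 < P n)
    (hκinj : Function.Injective κ) (j : Fin N) :
    Tendsto (fun α => ∑ n, (κ n / (α + κ n)) * P n) (nhdsWithin (-κ j) (Set.Iio (-κ j)))
      atBot := by
  have hrw : (fun α => ∑ n, (κ n / (α + κ n)) * P n)
      = fun α => (κ j * P j) * (α + κ j)⁻¹ +
        ∑ n ∈ Finset.univ.erase j, (κ n / (α + κ n)) * P n := by
    funext α
    rw [← Finset.add_sum_erase Finset.univ _ (Finset.mem_univ j)]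
    congr 1
    rw [div_eq_mul_inv]; ring
  rw [hrw]
  apply Tendsto.atBot_add (C := ∑ n ∈ Finset.univ.erase j, (κ n / (-κ j + κ n)) * P n)
  · apply Tendsto.const_mul_atBot (mul_pos (hκpos j) (hP j))
    have hneg : Tendsto (fun α : ℝ => -(α + κ j)) (nhdsWithin (-κ j) (Set.Iio (-κ j)))
        (nhdsWithin 0 (Set.Ioi 0)) := by
      apply tendsto_nhdsWithin_of_tendsto_nhds_of_eventually_within
      · have : Tendsto (fun α : ℝ => -(α + κ j)) (nhds (-κ j)) (nhds (-(-κ j + κ j))) :=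
          ((continuous_id.add continuous_const).neg).tendsto _
        simpa using this.mono_left nhdsWithin_le_nhds
      · filter_upwards [self_mem_nhdsWithin] with α (hα : α < -κ j)
        simpa [Set.mem_Ioi] using by linarith
    have := hneg.inv_tendsto_nhdsGT_zero
    have h2 : Tendsto (fun α : ℝ => -(-(α + κ j))⁻¹)
        (nhdsWithin (-κ j) (Set.Iio (-κ j))) atBot := tendsto_neg_atTop_atBot.comp this
    refine h2.congr fun α => ?_
    rw [show -(α + κ j) = -(α + κ j) from rfl, inv_neg, neg_neg]
  · apply tendsto_finset_sum
    intro m hm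
    have hne : -κ j + κ m ≠ 0 := by
      have : κ m ≠ κ j := fun h => (Finset.mem_erase.1 hm).1 (hκinj h)
      intro h; exact this (by linarith)
    exact (((continuousAt_const.div (continuousAt_id.add continuousAt_const)
      hne).mul continuousAt_const).continuousWithinAt : ContinuousWithinAt _ _ _)

private lemma theta_euroot (hN : 0 < N) (hκpos : ∀ n, 0 < κ n) (hP : ∀ n, 0 < P n)
    {l r : ℝ} (hpole : ∀ m, -κ m ∉ Set.Ioo l r)
    (ha : ∃ a ∈ Set.Ioo l r, 1 < ∑ n, (κ n / (a + κ n)) * P n)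
    (hb : ∃ b ∈ Set.Ioo l r, ∑ n, (κ n / (b + κ n)) * P n < 1) :
    ∃! α, α ∈ Set.Ioo l r ∧ ∑ n, (κ n / (α + κ n)) * P n = 1 := by
  set θ : ℝ → ℝ := fun α => ∑ n, (κ n / (α + κ n)) * P n with hθ
  have hanti : StrictAntiOn θ (Set.Ioo l r) := theta_anti κ P hN hκpos hP hpole
  obtain ⟨a, haI, haθ⟩ := ha
  obtain ⟨b, hbI, hbθ⟩ := hb
  have hab : a < b := by
    by_contra h
    push_neg at h
    rcases eq_or_lt_of_le h with h | h
    · rw [h] at hbθ; linarith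
    · have := hanti hbI haI h; linarith
  have hcont : ContinuousOn θ (Set.Icc a b) := by
    intro x hx
    have hxI : x ∈ Set.Ioo l r := ⟨lt_of_lt_of_le haI.1 hx.1, lt_of_le_of_lt hx.2 hbI.2⟩
    refine (theta_contAt κ P fun m => ?_).continuousWithinAt
    intro h
    exact hpole m (by rw [show -κ m = x by linarith]; exact hxI)
  have h1 : (1 : ℝ) ∈ Set.Ioo (θ b) (θ a) := ⟨hbθ, haθ⟩
  obtain ⟨c, hcI, hcθ⟩ := intermediate_value_Ioo' (le_of_lt hab) hcont h1
  have hcIoo : c ∈ Set.Ioo l r := ⟨lt_trans haI.1 hcI.1, lt_trans hcI.2 hbI.2⟩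
  refine ⟨c, ⟨hcIoo, hcθ⟩, ?_⟩
  rintro y ⟨hyI, hyθ⟩
  have hyθ' : θ y = 1 := hyθ
  rcases lt_trichotomy y c with h | h | h
  · have := hanti hyI hcIoo h; rw [hyθ', hcθ] at this; linarith
  · exact h
  · have := hanti hcIoo hyI h; rw [hyθ', hcθ] at this; linarith

private lemma theta_high (hκpos : ∀ n, 0 < κ n) (hP : ∀ n, 0 < P n)
    (hκinj : Function.Injective κ) (j : Fin N) {r : ℝ} (hr : -κ j < r) :
    ∃ a ∈ Set.Ioo (-κ j) r, 1 < ∑ n, (κ n / (a + κ n)) * P n := by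
  have h1 := (theta_tendsto_atTop κ P hκpos hP hκinj j).eventually_gt_atTop 1
  have h2 : Set.Ioo (-κ j) r ∈ nhdsWithin (-κ j) (Set.Ioi (-κ j)) :=
    Ioo_mem_nhdsGT_of_mem ⟨le_refl _, hr⟩
  rcases (h1.and (eventually_of_mem h2 fun x hx => hx)).exists with ⟨a, ha1, ha2⟩
  exact ⟨a, ha2, ha1⟩

private lemma theta_low (hκpos : ∀ n, 0 < κ n) (hP : ∀ n, 0 < P n)
    (hκinj : Function.Injective κ) (j : Fin N) {l : ℝ} (hl : l < -κ j) :
    ∃ b ∈ Set.Ioo l (-κ j), ∑ n, (κ n / (b + κ n)) * P n < 1 := by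
  have h1 := (theta_tendsto_atBot κ P hκpos hP hκinj j).eventually_lt_atBot 1
  have h2 : Set.Ioo l (-κ j) ∈ nhdsWithin (-κ j) (Set.Iio (-κ j)) :=
    Ioo_mem_nhdsLT_of_mem ⟨hl, le_refl _⟩
  rcases (h1.and (eventually_of_mem h2 fun x hx => hx)).exists with ⟨b, hb1, hb2⟩
  exact ⟨b, hb2, hb1⟩

end helpers

theorem stmt_13 {N : ℕ} (hN : 0 < N) (κ P : Fin N → ℝ)
    (hκpos : ∀ n, 0 < κ n) (hκmono : StrictMono κ)
    (hP : ∀ n, 0 < P n ∧ P n < 1) (hsum : ∑ n, P n < 1) :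
    let θ : ℝ → ℝ := fun α => ∑ n, (κ n / (α + κ n)) * P n
    -- exactly one solution in each interval (-κ_{n+1}, -κ_n)
    (∀ n : Fin N, ∀ h : (n : ℕ) + 1 < N,
      ∃! α, α ∈ Set.Ioo (-(κ ⟨(n : ℕ) + 1, h⟩)) (-(κ n)) ∧ θ α = 1) ∧
    -- exactly one solution in (-κ_1, 0)
    (∃! α, α ∈ Set.Ioo (-(κ ⟨0, hN⟩)) 0 ∧ θ α = 1) ∧
    -- no solutions with α ≥ 0
    (∀ α, 0 ≤ α → θ α ≠ 1) ∧
    -- no solutions with α < -κ_N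
    (∀ α, α < -(κ ⟨N - 1, by omega⟩) → θ α ≠ 1) ∧
    -- all solutions are negative, so μ = 1/(1-α) > 0
    (∀ α, (∀ n, α ≠ -(κ n)) → θ α = 1 → α < 0 ∧ 0 < (1 - α)⁻¹) := by
  intro θ
  haveI : Nonempty (Fin N) := ⟨⟨0, hN⟩⟩
  have hPpos : ∀ n, 0 < P n := fun n => (hP n).1
  have hκinj : Function.Injective κ := hκmono.injective
  -- no solutions with α ≥ 0
  have part3 : ∀ α, 0 ≤ α → θ α ≠ 1 := by
    intro α hα
    have hle : θ α ≤ ∑ n, P n := by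
      apply Finset.sum_le_sum
      intro m _
      have hd : 0 < α + κ m := by have := hκpos m; linarith
      have : κ m / (α + κ m) ≤ 1 := (div_le_one hd).2 (by linarith)
      nlinarith [hPpos m]
    linarith [lt_of_le_of_lt hle hsum]
  -- no solutions with α < -κ_{N-1}
  have part4 : ∀ α, α < -(κ ⟨N - 1, by omega⟩) → θ α ≠ 1 := by
    intro α hα
    have hneg : θ α < 0 := by
      apply Finset.sum_neg _ Finset.univ_nonempty
      intro m _
      have hle : κ m ≤ κ ⟨N - 1, by omega⟩ := hκmono.monotone (by
        simp [Fin.le_def]; omega)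
      have hd : α + κ m < 0 := by linarith
      exact mul_neg_of_neg_of_pos (div_neg_of_pos_of_neg (hκpos m) hd) (hPpos m)
    linarith
  refine ⟨?_, ?_, part3, part4, ?_⟩
  · -- intervals (-κ_{n+1}, -κ_n)
    intro n h
    set j : Fin N := ⟨(n : ℕ) + 1, h⟩ with hj
    have hlr : -κ j < -κ n := by
      have : κ n < κ j := hκmono (by simp [Fin.lt_def, hj])
      linarith
    apply theta_euroot κ P hN hκpos hPpos
    · intro m hm
      have h1 : κ n < κ m := by
        have := hm.2; have := neg_lt_neg_iff.1 hm.2; linarith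
      have h2 : κ m < κ j := by
        have := hm.1; linarith
      have hn1 : (n : ℕ) < (m : ℕ) := hκmono.lt_iff_lt.1 h1
      have hn2 : (m : ℕ) < (n : ℕ) + 1 := by
        have := hκmono.lt_iff_lt.1 h2; exact Fin.lt_def.mp this
      omega
    · exact theta_high κ P hκpos hPpos hκinj j hlr
    · exact theta_low κ P hκpos hPpos hκinj n hlr
  · -- interval (-κ_0, 0)
    set j : Fin N := ⟨0, hN⟩ with hj
    have hl0 : -κ j < 0 := by have := hκpos j; linarith
    apply theta_euroot κ P hN hκpos hPpos
    · intro m hm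
      have h1 : κ m < κ j := by have := hm.1; linarith
      have h2 := Fin.lt_def.mp (hκmono.lt_iff_lt.1 h1)
      simp [hj] at h2
    · exact theta_high κ P hκpos hPpos hκinj j hl0
    · -- point near 0 with θ < 1
      have hc : ContinuousAt θ 0 := theta_contAt κ P fun m => by
        have := hκpos m; intro h; linarith
      have hθ0 : θ 0 = ∑ n, P n := by
        apply Finset.sum_congr rfl
        intro m _
        rw [zero_add, div_self (ne_of_gt (hκpos m)), one_mul]
      have h1 : ∀ᶠ x in nhds (0 : ℝ), θ x < 1 := by
        have : θ 0 < 1 := by rw [hθ0]; exact hsum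
        exact hc.eventually_lt_const this
      have h1' : ∀ᶠ x in nhdsWithin (0 : ℝ) (Set.Iio 0), θ x < 1 :=
        h1.filter_mono nhdsWithin_le_nhds
      have h2 : Set.Ioo (-κ j) 0 ∈ nhdsWithin (0 : ℝ) (Set.Iio 0) :=
        Ioo_mem_nhdsLT_of_mem ⟨hl0, le_refl _⟩
      rcases (h1'.and (eventually_of_mem h2 fun x hx => hx)).exists with ⟨b, hb1, hb2⟩
      exact ⟨b, hb2, hb1⟩
  · -- all solutions negative
    intro α hα hθ
    have hneg : α < 0 := by
      by_contra h
      push_neg at h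
      exact part3 α h hθ
    exact ⟨hneg, inv_pos.2 (by linarith)⟩
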